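/- Let μ > 0, γ > 0, g > 0 with 2γg > 1, and let v ∈ ℝ², v ≠ 0. Define χ_γ(v) = g if γ|v| ≥ g + 1/(2γ); χ_γ(v) = g − (γ/2)(g − γ|v| + 1/(2γ))² if |γ|v| − g| ≤ 1/(2γ); and χ_γ(v) = γ|v| if γ|v| ≤ g − 1/(2γ). Define the 2×2 matrix M = 2μ I + (χ_γ(v)/|v|) I − (χ_γ(v)/|v|³) v vᵀ + 1_S · (γ²/|v|²)(g − γ|v| + 1/(2γ)) v vᵀ + 1_I · (γ/|v|²) v vᵀ, where 1_S = 1 if |γ|v| − g| < 1/(2γ) and 0 otherwise, and 1_I = 1 if γ|v| ≤ g − 1/(2γ) and 0 otherwise. Then M is symmetric and positive definite. -/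

import Mathlib

/-- The function `χ_γ` from the proof of Proposition 3.2 of the paper. -/
noncomputable def chiReg (γ g : ℝ) (v : EuclideanSpace ℝ (Fin 2)) : ℝ :=
  if g + 1 / (2 * γ) ≤ γ * ‖v‖ then g
  else if |γ * ‖v‖ - g| ≤ 1 / (2 * γ) then g - γ / 2 * (g - γ * ‖v‖ + 1 / (2 * γ)) ^ 2
  else γ * ‖v‖

/-- The coefficient matrix M of the linearized equation (3.17) of the paper. -/
noncomputable def Mmat (μ γ g : ℝ) (v : EuclideanSpace ℝ (Fin 2)) :
    Matrix (Fin 2) (Fin 2) ℝ :=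
  (2 * μ) • (1 : Matrix (Fin 2) (Fin 2) ℝ)
    + (chiReg γ g v / ‖v‖) • (1 : Matrix (Fin 2) (Fin 2) ℝ)
    - (chiReg γ g v / ‖v‖ ^ 3) • Matrix.of (fun i j => v i * v j)
    + (if |γ * ‖v‖ - g| < 1 / (2 * γ) then (1 : ℝ) else 0) •
        (γ ^ 2 / ‖v‖ ^ 2 * (g - γ * ‖v‖ + 1 / (2 * γ))) • Matrix.of (fun i j => v i * v j)
    + (if γ * ‖v‖ ≤ g - 1 / (2 * γ) then (1 : ℝ) else 0) •
        (γ / ‖v‖ ^ 2) • Matrix.of (fun i j => v i * v j)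

/-- Decomposition of `Mmat` as `a • 1 + b • v vᵀ`. -/
theorem Mmat_eq (μ γ g : ℝ) (v : EuclideanSpace ℝ (Fin 2)) :
    Mmat μ γ g v = (2 * μ + chiReg γ g v / ‖v‖) • (1 : Matrix (Fin 2) (Fin 2) ℝ)
      + (- (chiReg γ g v / ‖v‖ ^ 3)
        + (if |γ * ‖v‖ - g| < 1 / (2 * γ) then (1:ℝ) else 0) *
            (γ ^ 2 / ‖v‖ ^ 2 * (g - γ * ‖v‖ + 1 / (2 * γ)))
        + (if γ * ‖v‖ ≤ g - 1 / (2 * γ) then (1:ℝ) else 0) * (γ / ‖v‖ ^ 2))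
          • Matrix.of (fun i j => v i * v j) := by
  unfold Mmat
  module

/-- Quadratic form of `a • 1 + b • v vᵀ`. -/
theorem quadForm_eq (a b : ℝ) (v : EuclideanSpace ℝ (Fin 2)) (x : Fin 2 → ℝ) :
    dotProduct (star x)
      ((a • (1 : Matrix (Fin 2) (Fin 2) ℝ) + b • Matrix.of (fun i j => v i * v j)).mulVec x)
    = a * (x 0 ^ 2 + x 1 ^ 2) + b * (v 0 * x 0 + v 1 * x 1) ^ 2 := by
  simp only [Matrix.mulVec, dotProduct, Fin.sum_univ_two, Pi.star_apply, star_trivial,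
    Matrix.add_apply, Matrix.smul_apply, Matrix.one_apply, Matrix.of_apply, smul_eq_mul]
  norm_num
  ring

theorem chiReg_nonneg (γ g : ℝ) (hγ : 0 < γ) (hg : 0 < g) (hγg : 1 < 2 * γ * g)
    (v : EuclideanSpace ℝ (Fin 2)) : 0 ≤ chiReg γ g v := by
  unfold chiReg
  have hu : 2 * γ * (1 / (2 * γ)) = 1 := by field_simp
  split_ifs with h1 h2
  · exact hg.le
  · rw [abs_le] at h2
    set t := g - γ * ‖v‖ + 1 / (2 * γ) with ht
    have ht0 : 0 ≤ t := by rw [ht]; linarith [h2.2]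
    have ht2 : t ≤ 2 * (1 / (2 * γ)) := by rw [ht]; linarith [h2.1]
    have hγt : γ * t ≤ 1 := by
      calc γ * t ≤ γ * (2 * (1 / (2 * γ))) := mul_le_mul_of_nonneg_left ht2 hγ.le
        _ = 1 := by rw [show γ * (2 * (1 / (2 * γ))) = 2 * γ * (1 / (2 * γ)) from by ring, hu]
    have hug : 1 / (2 * γ) < g := by nlinarith
    nlinarith [mul_nonneg ht0 (sub_nonneg.mpr hγt)]
  · positivity

/-- The matrix M of (3.17) is symmetric and positive definite. -/
theorem Mmat_isSymm_posDef (μ γ g : ℝ) (hμ : 0 < μ) (hγ : 0 < γ) (hg : 0 < g)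
    (hγg : 1 < 2 * γ * g) (v : EuclideanSpace ℝ (Fin 2)) (hv : v ≠ 0) :
    (Mmat μ γ g v).IsSymm ∧ (Mmat μ γ g v).PosDef := by
  have hr : (0:ℝ) < ‖v‖ := norm_pos_iff.mpr hv
  have hr2 : ‖v‖ ^ 2 = v 0 ^ 2 + v 1 ^ 2 := by
    rw [EuclideanSpace.norm_eq, Real.sq_sqrt (by positivity)]
    simp [Fin.sum_univ_two, Real.norm_eq_abs, sq_abs]
  have hP : (Matrix.of fun i j => v i * v j : Matrix (Fin 2) (Fin 2) ℝ).IsSymm :=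
    Matrix.IsSymm.ext fun i j => mul_comm _ _
  have hsymm : (Mmat μ γ g v).IsSymm := by
    rw [Mmat_eq]
    exact (Matrix.isSymm_one.smul _).add (hP.smul _)
  refine ⟨hsymm, Matrix.posDef_iff_dotProduct_mulVec.mpr ⟨?_, ?_⟩⟩
  · rw [Matrix.IsHermitian, Matrix.conjTranspose_eq_transpose_of_trivial]
    exact hsymm
  intro x hx
  have hc : 0 ≤ chiReg γ g v := chiReg_nonneg γ g hγ hg hγg v
  have hS : 0 ≤ (if |γ * ‖v‖ - g| < 1 / (2 * γ) then (1:ℝ) else 0) *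
      (γ ^ 2 / ‖v‖ ^ 2 * (g - γ * ‖v‖ + 1 / (2 * γ))) := by
    split_ifs with h
    · rw [abs_lt] at h
      have : 0 < g - γ * ‖v‖ + 1 / (2 * γ) := by linarith [h.1]
      positivity
    · simp
  have hI : 0 ≤ (if γ * ‖v‖ ≤ g - 1 / (2 * γ) then (1:ℝ) else 0) * (γ / ‖v‖ ^ 2) := by
    split_ifs with h
    · positivity
    · simp
  show 0 < dotProduct (star x) ((Mmat μ γ g v).mulVec x)
  rw [Mmat_eq, quadForm_eq]
  have hn2 : 0 < x 0 ^ 2 + x 1 ^ 2 := by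
    have hne : x 0 ≠ 0 ∨ x 1 ≠ 0 := by
      by_contra h
      push_neg at h
      exact hx (funext fun i => by fin_cases i <;> simp [h.1, h.2])
    rcases hne with h | h
    · have : 0 < x 0 ^ 2 := by positivity
      nlinarith [sq_nonneg (x 1)]
    · have : 0 < x 1 ^ 2 := by positivity
      nlinarith [sq_nonneg (x 0)]
  have hCS : (v 0 * x 0 + v 1 * x 1) ^ 2 ≤ ‖v‖ ^ 2 * (x 0 ^ 2 + x 1 ^ 2) := by
    rw [hr2]; nlinarith [sq_nonneg (v 0 * x 1 - v 1 * x 0)]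
  have key : 0 ≤ chiReg γ g v / ‖v‖ * (x 0 ^ 2 + x 1 ^ 2)
      - chiReg γ g v / ‖v‖ ^ 3 * (v 0 * x 0 + v 1 * x 1) ^ 2 := by
    have heq : chiReg γ g v / ‖v‖ * (x 0 ^ 2 + x 1 ^ 2)
        - chiReg γ g v / ‖v‖ ^ 3 * (v 0 * x 0 + v 1 * x 1) ^ 2
        = chiReg γ g v / ‖v‖ ^ 3
          * (‖v‖ ^ 2 * (x 0 ^ 2 + x 1 ^ 2) - (v 0 * x 0 + v 1 * x 1) ^ 2) := by
      field_simp
    rw [heq]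
    exact mul_nonneg (by positivity) (by linarith)
  nlinarith [mul_nonneg (add_nonneg hS hI) (sq_nonneg (v 0 * x 0 + v 1 * x 1))]
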